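/- Let G be a finite group of order n with identity e. If a monomial x_{a_1} x_{a_2} ⋯ x_{a_n} (with a_1, …, a_n ∈ G, repetitions allowed) occurs in the group determinant Θ(G), i.e., has nonzero coefficient, then the elements a_1, …, a_n can be reordered so that their product (with multiplicity) equals e. -/

import Mathlib

open List

/-- Extend an equiv of `Fin`s by fixing a new first element. -/
private def extEquiv {m k : ℕ} (σ : Fin m ≃ Fin k) : Fin (m + 1) ≃ Fin (k + 1) :=
  (finSuccEquiv m).trans ((Equiv.optionCongr σ).trans (finSuccEquiv k).symm)

private lemma swap_case {α : Type*} (x y : α) (l : List α) :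
    ∀ i, (y :: x :: l).get i = (x :: y :: l).get
      (Equiv.swap ⟨0, Nat.succ_pos _⟩ ⟨1, Nat.succ_lt_succ (Nat.succ_pos _)⟩ i) := by
  intro i
  refine Fin.cases ?_ (fun j => ?_) i
  · simp [Equiv.swap_apply_def, Fin.ext_iff]
  · refine Fin.cases ?_ (fun j' => ?_) j
    · simp [Equiv.swap_apply_def, Fin.ext_iff]
    · rw [Equiv.swap_apply_of_ne_of_ne (by simp [Fin.ext_iff]) (by simp [Fin.ext_iff])]
      simp

/-- A permutation of lists gives an equiv of index types matching entries. -/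
private lemma perm_exists_equiv {α : Type*} {l₁ l₂ : List α} (h : l₁.Perm l₂) :
    ∃ e : Fin l₂.length ≃ Fin l₁.length, ∀ i, l₂.get i = l₁.get (e i) := by
  induction h with
  | nil => exact ⟨Equiv.refl _, fun i => i.elim0⟩
  | cons x h ih =>
    obtain ⟨e, he⟩ := ih
    refine ⟨extEquiv e, fun i => ?_⟩
    refine Fin.cases ?_ (fun j => ?_) i
    · simp [extEquiv]
    · simpa [extEquiv] using he j
  | swap x y l => exact ⟨_, swap_case y x l⟩
  | trans h₁ h₂ ih₁ ih₂ =>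
    obtain ⟨e₁, he₁⟩ := ih₁
    obtain ⟨e₂, he₂⟩ := ih₂
    exact ⟨e₂.trans e₁, fun i => by rw [he₂ i, he₁]; rfl⟩

/-- Key combinatorial lemma: if a list of pairs has equal multisets of first and second
components, the list of quotients `p.1 * p.2⁻¹` can be reordered to have product `1`. -/
private lemma key_lemma {G : Type*} [Group G] :
    ∀ (n : ℕ) (l : List (G × G)), l.length = n →
      (l.map Prod.fst).Perm (l.map Prod.snd) →
      ∃ l' : List G, l'.Perm (l.map fun p => p.1 * p.2⁻¹) ∧ l'.prod = 1 := by
  intro n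
  induction n using Nat.strong_induction_on with
  | _ n ih =>
    intro l hlen hperm
    match l, hlen with
    | [], _ => exact ⟨[], by simp⟩
    | (g, h) :: t, hlen =>
      have hn : t.length + 1 = n := by simpa using hlen
      by_cases hgh : g = h
      · subst hgh
        simp only [map_cons] at hperm
        have hperm' := hperm.cons_inv
        obtain ⟨l', hl', hprod⟩ := ih t.length (by omega) t rfl hperm'
        exact ⟨(g * g⁻¹) :: l', hl'.cons _, by simp [hprod]⟩
      · -- h occurs among the first components of t
        have hh : h ∈ t.map Prod.fst := by
          have : h ∈ ((g, h) :: t).map Prod.fst := hperm.mem_iff.mpr (by simp)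
          simpa [hgh, Ne.symm hgh, eq_comm] using this
        obtain ⟨p, hp, hp1⟩ := List.mem_map.mp hh
        obtain ⟨u₁, u₂, rfl⟩ := List.append_of_mem hp
        set t' := u₁ ++ u₂ with ht'
        have ht : (u₁ ++ p :: u₂).Perm (p :: t') := List.perm_middle
        have hlen' : t'.length + 1 < n := by
          simp only [ht', List.length_append, List.length_cons] at hn ⊢
          omega
        have hperm2 : ((g, p.2) :: t').map Prod.fst |>.Perm (((g, p.2) :: t').map Prod.snd) := by
          simp only [map_cons]
          have h1 : (g :: (u₁ ++ p :: u₂).map Prod.fst).Perm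
              (h :: (u₁ ++ p :: u₂).map Prod.snd) := by simpa using hperm
          have h2 : ((u₁ ++ p :: u₂).map Prod.fst).Perm (h :: t'.map Prod.fst) := by
            simpa [hp1] using ht.map Prod.fst
          have h3 : ((u₁ ++ p :: u₂).map Prod.snd).Perm (p.2 :: t'.map Prod.snd) := by
            simpa using ht.map Prod.snd
          have h4 : (h :: g :: t'.map Prod.fst).Perm (h :: p.2 :: t'.map Prod.snd) := by
            calc h :: g :: t'.map Prod.fst
                ~ g :: h :: t'.map Prod.fst := List.Perm.swap _ _ _
              _ ~ g :: (u₁ ++ p :: u₂).map Prod.fst := (List.Perm.cons _ h2).symm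
              _ ~ h :: (u₁ ++ p :: u₂).map Prod.snd := h1
              _ ~ h :: p.2 :: t'.map Prod.snd := List.Perm.cons _ h3
          exact h4.cons_inv
        obtain ⟨l', hl', hprod⟩ := ih (t'.length + 1) hlen' ((g, p.2) :: t') rfl hperm2
        have hmem : g * p.2⁻¹ ∈ l' := hl'.mem_iff.mpr (by simp)
        obtain ⟨s₁, s₂, rfl⟩ := List.append_of_mem hmem
        refine ⟨s₁ ++ (g * h⁻¹) :: (h * p.2⁻¹) :: s₂, ?_, ?_⟩
        · have h5 : (s₁ ++ s₂).Perm (t'.map fun p => p.1 * p.2⁻¹) := by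
            have := hl'
            simp only [map_cons] at this
            exact (List.perm_middle.symm.trans this).cons_inv
          have h6 : ((u₁ ++ p :: u₂).map fun p => p.1 * p.2⁻¹).Perm
              ((h * p.2⁻¹) :: t'.map fun p => p.1 * p.2⁻¹) := by
            simpa [hp1] using ht.map (fun p => p.1 * p.2⁻¹)
          calc s₁ ++ (g * h⁻¹) :: (h * p.2⁻¹) :: s₂
              ~ (g * h⁻¹) :: (s₁ ++ (h * p.2⁻¹) :: s₂) := List.perm_middle
            _ ~ (g * h⁻¹) :: (h * p.2⁻¹) :: (s₁ ++ s₂) := List.Perm.cons _ List.perm_middle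
            _ ~ (g * h⁻¹) :: (h * p.2⁻¹) :: t'.map (fun p => p.1 * p.2⁻¹) :=
                List.Perm.cons _ (List.Perm.cons _ h5)
            _ ~ (g * h⁻¹) :: (u₁ ++ p :: u₂).map (fun p => p.1 * p.2⁻¹) :=
                List.Perm.cons _ h6.symm
            _ = ((g, h) :: (u₁ ++ p :: u₂)).map (fun p => p.1 * p.2⁻¹) := by simp
        · have := hprod
          simp only [List.prod_append, List.prod_cons] at this ⊢
          calc s₁.prod * (g * h⁻¹ * (h * p.2⁻¹ * s₂.prod))
              = s₁.prod * (g * p.2⁻¹ * s₂.prod) := by group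
            _ = 1 := this

private lemma sum_single_multiset {ι α : Type*} (s : Finset ι) (f : ι → α) :
    ∑ i ∈ s, ({f i} : Multiset α) = s.val.map f := by
  induction s using Finset.cons_induction with
  | empty => simp
  | cons a s ha ih => simp [ih]

/-- From the multiset identity, produce a reordering of the `a i` with product one. -/
private lemma exists_perm_prod_eq_one {G : Type*} [Group G] [Fintype G]
    (a : Fin (Fintype.card G) → G) (τ : Equiv.Perm G)
    (hms : (Finset.univ.val.map fun g : G => τ g * g⁻¹) = ↑(List.ofFn a)) :
    ∃ l' : List G, (List.ofFn a).Perm l' ∧ l'.prod = 1 := by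
  classical
  set L : List (G × G) := Finset.univ.toList.map (fun g => (τ g, g)) with hL
  have hq : L.map (fun p => p.1 * p.2⁻¹) = Finset.univ.toList.map (fun g => τ g * g⁻¹) := by
    simp [hL, List.map_map, Function.comp]
  have hLperm : (L.map Prod.fst).Perm (L.map Prod.snd) := by
    rw [← Multiset.coe_eq_coe]
    simp only [hL, List.map_map]
    show (↑(Finset.univ.toList.map fun g => τ g) : Multiset G)
        = ↑(Finset.univ.toList.map fun g : G => g)
    rw [← Multiset.map_coe, ← Multiset.map_coe, Finset.coe_toList]
    simp [Multiset.map_univ_val_equiv τ]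
  obtain ⟨l', hl', hprod⟩ := key_lemma L.length L rfl hLperm
  refine ⟨l', ?_, hprod⟩
  rw [← Multiset.coe_eq_coe] at hl' ⊢
  rw [hl', hq, ← Multiset.map_coe, Finset.coe_toList, hms]

/-- Two tuples that are permutations of each other as lists differ by a permutation
of the index type. -/
private lemma exists_perm_ofFn {α : Type*} {n : ℕ} (a : Fin n → α) (l' : List α)
    (hp : (List.ofFn a).Perm l') :
    ∃ σ : Equiv.Perm (Fin n), (List.ofFn fun i => a (σ i)) = l' := by
  obtain ⟨e, he⟩ := perm_exists_equiv hp
  have h1 : l'.length = n := by rw [← hp.length_eq]; exact (List.length_ofFn : (List.ofFn a).length = n)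
  refine ⟨(finCongr h1.symm).trans (e.trans (finCongr ((List.length_ofFn : (List.ofFn a).length = n)))), ?_⟩
  apply List.ext_get (by simp [h1])
  intro i hi1 hi2
  rw [List.get_ofFn, he ⟨i, hi2⟩, List.get_ofFn]
  congr 1

/-- The group determinant `Θ(G)` of a finite group `G`, as a multivariate polynomial over a
commutative ring `R` in independent commuting variables `x_g` (`g ∈ G`):
`Θ(G) = det((x_{g h⁻¹})_{g,h ∈ G})`. -/
noncomputable def groupDet (R G : Type*) [CommRing R] [Group G] [Finite G] :
    MvPolynomial G R := by
  classical
  letI := Fintype.ofFinite G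
  exact Matrix.det (Matrix.of fun g h : G => MvPolynomial.X (g * h⁻¹))

/-- If a monomial `x_{a 1} ⋯ x_{a n}` (with `n = |G|`) occurs in the group determinant `Θ(G)`,
then the `a i` can be reordered so that their product is the identity. -/
theorem prod_eq_one_of_coeff_groupDet_ne_zero {G : Type*} [Group G] [Fintype G]
    (a : Fin (Fintype.card G) → G)
    (h : MvPolynomial.coeff (∑ i, Finsupp.single (a i) 1) (groupDet ℂ G) ≠ 0) :
    ∃ σ : Equiv.Perm (Fin (Fintype.card G)),
      (List.ofFn fun i => a (σ i)).prod = 1 := by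
  classical
  have hgd : groupDet ℂ G
      = Matrix.det (Matrix.of fun g h : G => (MvPolynomial.X (g * h⁻¹) : MvPolynomial G ℂ)) := by
    unfold groupDet
    congr!
  rw [hgd, Matrix.det_apply, MvPolynomial.coeff_sum] at h
  obtain ⟨τ, -, hτ⟩ := Finset.exists_ne_zero_of_sum_ne_zero h
  rw [MvPolynomial.coeff_smul] at hτ
  have hmon : (∏ i : G, (Matrix.of fun g h : G =>
        (MvPolynomial.X (g * h⁻¹) : MvPolynomial G ℂ)) (τ i) i)
      = MvPolynomial.monomial (∑ i : G, Finsupp.single (τ i * i⁻¹) 1) 1 := by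
    rw [MvPolynomial.monomial_sum_one]
    rfl
  rw [hmon, MvPolynomial.coeff_monomial] at hτ
  have hde : (∑ g : G, Finsupp.single (τ g * g⁻¹) 1) = ∑ i, Finsupp.single (a i) 1 := by
    by_contra hne
    rw [if_neg hne] at hτ
    simp at hτ
  have hms : (Finset.univ.val.map fun g : G => τ g * g⁻¹) = ↑(List.ofFn a) := by
    have := congrArg Finsupp.toMultiset hde
    rw [map_sum, map_sum] at this
    simp only [Finsupp.toMultiset_single, one_nsmul] at this
    rw [sum_single_multiset, sum_single_multiset, Fin.univ_val_map] at this
    exact this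
  obtain ⟨l', hl', hprod⟩ := exists_perm_prod_eq_one a τ hms
  obtain ⟨σ, hσ⟩ := exists_perm_ofFn a l' hl'
  exact ⟨σ, by rw [hσ, hprod]⟩
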